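/- Let V be a countable index set, let H(x) be a finite-dimensional complex Hilbert space for each x ∈ V, let H = ⊕_{x∈V} H(x) be their Hilbert space (ℓ²-) direct sum, and let P_x ∈ B(H) denote the orthogonal projection onto the summand H(x). Let {A_k}_{k∈K} be a countable family of bounded operators on H such that each A_k satisfies A_k = P_{y_k} A_k P_{x_k} for some vertices x_k, y_k ∈ V, and let 𝔄 be the C*-subalgebra of B(H) generated by {P_x : x ∈ V} ∪ {A_k : k ∈ K}. Then for every finite subset F ⊆ 𝔄 and every ε > 0, there exists a finite-dimensional *-subalgebra B of B(H) with B ⊆ 𝔄 such that for every a ∈ F there exists b ∈ B with ‖a − b‖ < ε. -/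

import Mathlib

/-- The orthogonal projection of the Hilbert space direct sum `lp H 2` onto the
summand `H x`. -/
noncomputable def lpProj {V : Type*} [DecidableEq V] (H : V → Type*)
    [∀ x, NormedAddCommGroup (H x)] [∀ x, InnerProductSpace ℂ (H x)] (x : V) :
    lp H 2 →L[ℂ] lp H 2 :=
  LinearMap.mkContinuous
    { toFun := fun f => lp.single 2 x (f x)
      map_add' := fun f g => by
        apply lp.ext
        funext j
        by_cases h : j = x
        · subst h
          simp [lp.single_apply_self, lp.coeFn_add]
        · simp [lp.single_apply_ne 2 x _ h, lp.coeFn_add]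
      map_smul' := fun c f => by
        apply lp.ext
        funext j
        by_cases h : j = x
        · subst h
          simp [lp.single_apply_self, lp.coeFn_smul]
        · simp [lp.single_apply_ne 2 x _ h, lp.coeFn_smul] }
    1
    (fun f => by
      have h1 : ‖lp.single 2 x (f x)‖ = ‖f x‖ := lp.norm_single (by norm_num) x (f x)
      have h2 : ‖f x‖ ≤ ‖f‖ := lp.norm_apply_le_norm (by norm_num) f x
      simpa [h1] using h2)

section Proj

variable {V : Type*} [DecidableEq V] (H : V → Type*)
  [∀ x, NormedAddCommGroup (H x)] [∀ x, InnerProductSpace ℂ (H x)]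

lemma lpProj_apply (x : V) (f : lp H 2) : lpProj H x f = lp.single 2 x (f x) := rfl

/-- `lp.single` as a linear map. -/
noncomputable def lpSingleₗ (x : V) : H x →ₗ[ℂ] lp H 2 where
  toFun v := lp.single 2 x v
  map_add' a b := by
    apply lp.ext
    funext j
    by_cases h : j = x
    · subst h
      simp [lp.single_apply_self, lp.coeFn_add]
    · simp [lp.single_apply_ne 2 x _ h, lp.coeFn_add]
  map_smul' c a := by
    apply lp.ext
    funext j
    by_cases h : j = x
    · subst h
      simp [lp.single_apply_self, lp.coeFn_smul]
    · simp [lp.single_apply_ne 2 x _ h, lp.coeFn_smul]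

variable [∀ x, FiniteDimensional ℂ (H x)]

lemma lpProj_isSelfAdjoint (x : V) : IsSelfAdjoint (lpProj H x) := by
  apply LinearMap.IsSymmetric.isSelfAdjoint
  intro f g
  show (inner ℂ (lpProj H x f) g : ℂ) = inner ℂ f (lpProj H x g)
  rw [lpProj_apply, lpProj_apply, lp.inner_single_left, lp.inner_single_right]

lemma finiteDimensional_range_lpProj (x : V) :
    FiniteDimensional ℂ (LinearMap.range (↑(lpProj H x) : lp H 2 →ₗ[ℂ] lp H 2)) := by
  have hle : LinearMap.range (↑(lpProj H x) : lp H 2 →ₗ[ℂ] lp H 2) ≤ LinearMap.range (lpSingleₗ H x) := by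
    intro v hv
    obtain ⟨f, rfl⟩ := LinearMap.mem_range.mp hv
    exact LinearMap.mem_range.mpr ⟨f x, rfl⟩
  exact Submodule.finiteDimensional_of_le hle

end Proj

section Corner

variable {E : Type*} [NormedAddCommGroup E] [InnerProductSpace ℂ E] [CompleteSpace E]

lemma range_mul_le_left (X Y : E →L[ℂ] E) :
    LinearMap.range (↑(X * Y) : E →ₗ[ℂ] E) ≤ LinearMap.range (X : E →ₗ[ℂ] E) := by
  intro v hv
  obtain ⟨f, rfl⟩ := LinearMap.mem_range.mp hv
  exact LinearMap.mem_range.mpr ⟨Y f, rfl⟩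

variable (E) in
/-- The operators of finite rank (with finite-rank adjoint), as a non-unital star
subalgebra of `B(E)`. -/
def finRankAlg : NonUnitalStarSubalgebra ℂ (E →L[ℂ] E) where
  carrier := {T | FiniteDimensional ℂ (LinearMap.range (T : E →ₗ[ℂ] E)) ∧
      FiniteDimensional ℂ (LinearMap.range (↑(star T) : E →ₗ[ℂ] E))}
  add_mem' {T S} hT hS := by
    have key : ∀ T' S' : E →L[ℂ] E, FiniteDimensional ℂ (LinearMap.range (T' : E →ₗ[ℂ] E)) →
        FiniteDimensional ℂ (LinearMap.range (S' : E →ₗ[ℂ] E)) →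
        FiniteDimensional ℂ (LinearMap.range (↑(T' + S') : E →ₗ[ℂ] E)) := by
      intro T' S' h1 h2
      have hle : LinearMap.range (↑(T' + S') : E →ₗ[ℂ] E) ≤ LinearMap.range (T' : E →ₗ[ℂ] E) ⊔ LinearMap.range (S' : E →ₗ[ℂ] E) := by
        intro v hv
        obtain ⟨f, rfl⟩ := LinearMap.mem_range.mp hv
        rw [ContinuousLinearMap.coe_coe, ContinuousLinearMap.add_apply]
        exact Submodule.add_mem_sup (LinearMap.mem_range.mpr ⟨f, rfl⟩)
          (LinearMap.mem_range.mpr ⟨f, rfl⟩)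
      haveI := h1; haveI := h2
      exact Submodule.finiteDimensional_of_le hle
    refine ⟨key T S hT.1 hS.1, ?_⟩
    rw [star_add]
    exact key _ _ hT.2 hS.2
  zero_mem' := by
    have h : LinearMap.range (↑(0 : E →L[ℂ] E) : E →ₗ[ℂ] E) = ⊥ := by
      ext v
      simp [LinearMap.mem_range, eq_comm]
    constructor
    · rw [h]; infer_instance
    · rw [star_zero, h]; infer_instance
  mul_mem' {T S} hT hS := by
    constructor
    · haveI := hT.1
      exact Submodule.finiteDimensional_of_le (range_mul_le_left T S)
    · rw [star_mul]
      haveI := hS.2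
      exact Submodule.finiteDimensional_of_le (range_mul_le_left (star S) (star T))
  smul_mem' c T hT := by
    have key : ∀ (c' : ℂ) (T' : E →L[ℂ] E), FiniteDimensional ℂ (LinearMap.range (T' : E →ₗ[ℂ] E)) →
        FiniteDimensional ℂ (LinearMap.range (↑(c' • T') : E →ₗ[ℂ] E)) := by
      intro c' T' h1
      have hle : LinearMap.range (↑(c' • T') : E →ₗ[ℂ] E) ≤ LinearMap.range (T' : E →ₗ[ℂ] E) := by
        intro v hv
        obtain ⟨f, rfl⟩ := LinearMap.mem_range.mp hv
        rw [ContinuousLinearMap.coe_coe, ContinuousLinearMap.smul_apply]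
        exact Submodule.smul_mem _ c' (LinearMap.mem_range.mpr ⟨f, rfl⟩)
      haveI := h1
      exact Submodule.finiteDimensional_of_le hle
    refine ⟨key c T hT.1, ?_⟩
    rw [star_smul]
    exact key _ _ hT.2
  star_mem' {T} hT := ⟨hT.2, by rw [star_star]; exact hT.1⟩

lemma mem_finRankAlg_iff {T : E →L[ℂ] E} :
    T ∈ finRankAlg E ↔ FiniteDimensional ℂ (LinearMap.range (T : E →ₗ[ℂ] E)) ∧
      FiniteDimensional ℂ (LinearMap.range (↑(star T) : E →ₗ[ℂ] E)) := Iff.rfl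

variable (W : Submodule ℂ E) [CompleteSpace W]

/-- The orthogonal projection onto `W`, as an endomorphism of `E`. -/
noncomputable def cornerProj : E →L[ℂ] E := W.subtypeL ∘L Submodule.orthogonalProjectionOnto W

lemma cornerProj_apply_mem {v : E} (hv : v ∈ W) : cornerProj W v = v := by
  show (W.subtypeL (Submodule.orthogonalProjectionOnto W v) : E) = v
  have h : Submodule.orthogonalProjectionOnto W v = ⟨v, hv⟩ := by
    conv_lhs => rw [show v = ((⟨v, hv⟩ : W) : E) from rfl]
    exact Submodule.orthogonalProjectionOnto_mem_subspace_eq_self _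
  rw [h]
  rfl

lemma cornerProj_mul_self : cornerProj W * cornerProj W = cornerProj W := by
  ext v
  rw [ContinuousLinearMap.mul_apply]
  exact cornerProj_apply_mem W (Submodule.coe_mem _)

lemma star_cornerProj : star (cornerProj W) = cornerProj W :=
  isSelfAdjoint_starProjection W

lemma cornerProj_mul_of_range_le {T : E →L[ℂ] E} (h : LinearMap.range (T : E →ₗ[ℂ] E) ≤ W) :
    cornerProj W * T = T := by
  ext v
  rw [ContinuousLinearMap.mul_apply]
  exact cornerProj_apply_mem W (h (LinearMap.mem_range.mpr ⟨v, rfl⟩))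

/-- The corner algebra of a subspace: operators supported on `W`. -/
noncomputable def cornerAlg : NonUnitalStarSubalgebra ℂ (E →L[ℂ] E) where
  carrier := {T | cornerProj W * T * cornerProj W = T}
  add_mem' {T S} hT hS := by
    have hT' : cornerProj W * T * cornerProj W = T := hT
    have hS' : cornerProj W * S * cornerProj W = S := hS
    show cornerProj W * (T + S) * cornerProj W = T + S
    rw [mul_add, add_mul, hT', hS']
  zero_mem' := by
    show cornerProj W * 0 * cornerProj W = 0
    rw [mul_zero, zero_mul]
  mul_mem' {T S} hT hS := by
    have hT' : cornerProj W * T * cornerProj W = T := hT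
    have hS' : cornerProj W * S * cornerProj W = S := hS
    have hTl : cornerProj W * T = T := by
      conv_lhs => rw [← hT']
      rw [← mul_assoc, ← mul_assoc, cornerProj_mul_self]
      exact hT'
    have hSr : S * cornerProj W = S := by
      conv_lhs => rw [← hS']
      rw [mul_assoc, cornerProj_mul_self]
      exact hS'
    show cornerProj W * (T * S) * cornerProj W = T * S
    rw [← mul_assoc, hTl, mul_assoc, hSr]
  smul_mem' c T hT := by
    have hT' : cornerProj W * T * cornerProj W = T := hT
    show cornerProj W * (c • T) * cornerProj W = c • T
    rw [mul_smul_comm, smul_mul_assoc, hT']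
  star_mem' {T} hT := by
    have hT' : cornerProj W * T * cornerProj W = T := hT
    show cornerProj W * star T * cornerProj W = star T
    conv_rhs => rw [← hT']
    rw [star_mul, star_mul, star_cornerProj, ← mul_assoc]

lemma mem_cornerAlg_iff {T : E →L[ℂ] E} :
    T ∈ cornerAlg W ↔ cornerProj W * T * cornerProj W = T := Iff.rfl

lemma mem_cornerAlg_of_range_le {T : E →L[ℂ] E} (h1 : LinearMap.range (T : E →ₗ[ℂ] E) ≤ W)
    (h2 : LinearMap.range (↑(star T) : E →ₗ[ℂ] E) ≤ W) : T ∈ cornerAlg W := by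
  have hl : cornerProj W * T = T := cornerProj_mul_of_range_le W h1
  have hr : T * cornerProj W = T := by
    have h := cornerProj_mul_of_range_le W h2
    calc T * cornerProj W = star (star (T * cornerProj W)) := (star_star _).symm
      _ = star (star (cornerProj W) * star T) := by rw [star_mul]
      _ = star (cornerProj W * star T) := by rw [star_cornerProj]
      _ = star (star T) := by rw [h]
      _ = T := star_star _
  show cornerProj W * T * cornerProj W = T
  rw [hl, hr]

lemma finiteDimensional_of_le_cornerAlg [FiniteDimensional ℂ W]
    (B : NonUnitalStarSubalgebra ℂ (E →L[ℂ] E)) (hB : B ≤ cornerAlg W) :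
    FiniteDimensional ℂ B := by
  let φ : B →ₗ[ℂ] (W →L[ℂ] W) :=
    { toFun := fun T => Submodule.orthogonalProjectionOnto W ∘L (T : E →L[ℂ] E) ∘L W.subtypeL
      map_add' := fun T S => by
        ext v
        simp
      map_smul' := fun c T => by
        ext v
        simp }
  have key : ∀ T : E →L[ℂ] E, cornerProj W * T * cornerProj W
      = W.subtypeL ∘L (Submodule.orthogonalProjectionOnto W ∘L T ∘L W.subtypeL) ∘L Submodule.orthogonalProjectionOnto W := by
    intro T
    ext v
    rfl
  have hφ : Function.Injective φ := by
    intro T S h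
    have h' : Submodule.orthogonalProjectionOnto W ∘L (T : E →L[ℂ] E) ∘L W.subtypeL
        = Submodule.orthogonalProjectionOnto W ∘L (S : E →L[ℂ] E) ∘L W.subtypeL := h
    have hT : cornerProj W * (T : E →L[ℂ] E) * cornerProj W = T := hB T.2
    have hS : cornerProj W * (S : E →L[ℂ] E) * cornerProj W = S := hB S.2
    have e : (T : E →L[ℂ] E) = S := by
      calc (T : E →L[ℂ] E) = cornerProj W * (T : E →L[ℂ] E) * cornerProj W := hT.symm
        _ = W.subtypeL ∘L (Submodule.orthogonalProjectionOnto W ∘L (T : E →L[ℂ] E) ∘L W.subtypeL)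
            ∘L Submodule.orthogonalProjectionOnto W := key _
        _ = W.subtypeL ∘L (Submodule.orthogonalProjectionOnto W ∘L (S : E →L[ℂ] E) ∘L W.subtypeL)
            ∘L Submodule.orthogonalProjectionOnto W := by rw [h']
        _ = cornerProj W * (S : E →L[ℂ] E) * cornerProj W := (key _).symm
        _ = S := hS
    exact Subtype.ext e
  exact FiniteDimensional.of_injective φ hφ

end Corner

set_option maxHeartbeats 1000000 in
/-- In the C*-algebra of a quantum causal history (generated by the vertex
projections and edge Kraus operators, each supported between two finite-dimensional vertex
summands), every finite subset can be approximated to any accuracy by elements of a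
finite-dimensional *-subalgebra contained in the algebra. -/
theorem qch_algebra_local_finite_dimensional_approximation
    {V : Type*} [Countable V] [DecidableEq V]
    (H : V → Type*) [∀ x, NormedAddCommGroup (H x)] [∀ x, InnerProductSpace ℂ (H x)]
    [∀ x, FiniteDimensional ℂ (H x)]
    {K : Type*} [Countable K]
    (A : K → (lp H 2 →L[ℂ] lp H 2)) (x y : K → V)
    (hA : ∀ k, A k = lpProj H (y k) * A k * lpProj H (x k))
    (𝔄 : NonUnitalStarSubalgebra ℂ (lp H 2 →L[ℂ] lp H 2))
    (h𝔄 : 𝔄 = (NonUnitalStarAlgebra.adjoin ℂ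
        (Set.range (lpProj H) ∪ Set.range A)).topologicalClosure)
    (F : Finset (lp H 2 →L[ℂ] lp H 2)) (hF : (F : Set (lp H 2 →L[ℂ] lp H 2)) ⊆ 𝔄)
    (ε : ℝ) (hε : 0 < ε) :
    ∃ B : NonUnitalStarSubalgebra ℂ (lp H 2 →L[ℂ] lp H 2),
      FiniteDimensional ℂ B ∧
      (B : Set (lp H 2 →L[ℂ] lp H 2)) ⊆ 𝔄 ∧
      ∀ a ∈ F, ∃ b ∈ B, ‖a - b‖ < ε := by
  set S : Set (lp H 2 →L[ℂ] lp H 2) := Set.range (lpProj H) ∪ Set.range A with hS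
  set 𝔄₀ := NonUnitalStarAlgebra.adjoin ℂ S with h𝔄₀
  -- choose approximants from the dense subalgebra
  have happrox : ∀ a ∈ F, ∃ b ∈ 𝔄₀, ‖a - b‖ < ε := by
    intro a ha
    have hmem : a ∈ _root_.closure (𝔄₀ : Set (lp H 2 →L[ℂ] lp H 2)) := by
      have := hF ha
      rw [h𝔄] at this
      exact this
    obtain ⟨b, hb, hd⟩ := Metric.mem_closure_iff.mp hmem ε hε
    exact ⟨b, hb, by rwa [dist_eq_norm] at hd⟩
  choose! b hb₀ hbε using happrox
  -- the generators are finite-rank operators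
  have hSfr : S ⊆ (finRankAlg (lp H 2) : Set (lp H 2 →L[ℂ] lp H 2)) := by
    rintro T (⟨x', rfl⟩ | ⟨k, rfl⟩)
    · refine ⟨finiteDimensional_range_lpProj H x', ?_⟩
      rw [(lpProj_isSelfAdjoint H x').star_eq]
      exact finiteDimensional_range_lpProj H x'
    · constructor
      · have hle : LinearMap.range (↑(A k) : lp H 2 →ₗ[ℂ] lp H 2) ≤ LinearMap.range (↑(lpProj H (y k)) : lp H 2 →ₗ[ℂ] lp H 2) := by
          rw [hA k]
          exact le_trans (range_mul_le_left _ _) (range_mul_le_left _ _)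
        haveI := finiteDimensional_range_lpProj H (y k)
        exact Submodule.finiteDimensional_of_le hle
      · have hstar : star (A k) = lpProj H (x k) * star (A k) * lpProj H (y k) := by
          conv_lhs => rw [hA k]
          rw [star_mul, star_mul, (lpProj_isSelfAdjoint H (x k)).star_eq,
            (lpProj_isSelfAdjoint H (y k)).star_eq, ← mul_assoc]
        have hle : LinearMap.range (↑(star (A k)) : lp H 2 →ₗ[ℂ] lp H 2) ≤ LinearMap.range (↑(lpProj H (x k)) : lp H 2 →ₗ[ℂ] lp H 2) := by
          rw [hstar]
          exact le_trans (range_mul_le_left _ _) (range_mul_le_left _ _)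
        haveI := finiteDimensional_range_lpProj H (x k)
        exact Submodule.finiteDimensional_of_le hle
  have h𝔄₀fr : 𝔄₀ ≤ finRankAlg (lp H 2) := NonUnitalStarAlgebra.adjoin_le hSfr
  have hbFR : ∀ a ∈ F, FiniteDimensional ℂ (LinearMap.range (↑(b a) : lp H 2 →ₗ[ℂ] lp H 2)) ∧
      FiniteDimensional ℂ (LinearMap.range (↑(star (b a)) : lp H 2 →ₗ[ℂ] lp H 2)) :=
    fun a ha => h𝔄₀fr (hb₀ a ha)
  -- the finite-dimensional subspace supporting all the approximants
  let Wf : {a // a ∈ F} → Submodule ℂ (lp H 2) :=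
    fun a => LinearMap.range (↑(b a.1) : lp H 2 →ₗ[ℂ] lp H 2) ⊔ LinearMap.range (↑(star (b a.1)) : lp H 2 →ₗ[ℂ] lp H 2)
  haveI hWf : ∀ a : {a // a ∈ F}, FiniteDimensional ℂ (Wf a) := by
    intro a
    haveI := (hbFR a.1 a.2).1
    haveI := (hbFR a.1 a.2).2
    exact Submodule.finiteDimensional_sup _ _
  let W : Submodule ℂ (lp H 2) := F.attach.sup Wf
  haveI hWfd : FiniteDimensional ℂ W := Submodule.finiteDimensional_finset_sup _ _
  haveI : CompleteSpace W := FiniteDimensional.complete ℂ W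
  have hWle : ∀ a ∈ F, LinearMap.range (↑(b a) : lp H 2 →ₗ[ℂ] lp H 2) ≤ W ∧ LinearMap.range (↑(star (b a)) : lp H 2 →ₗ[ℂ] lp H 2) ≤ W := by
    intro a ha
    have h1 : Wf ⟨a, ha⟩ ≤ W := Finset.le_sup (Finset.mem_attach F ⟨a, ha⟩)
    exact ⟨le_trans le_sup_left h1, le_trans le_sup_right h1⟩
  -- the finite-dimensional *-subalgebra
  refine ⟨NonUnitalStarAlgebra.adjoin ℂ (b '' (F : Set (lp H 2 →L[ℂ] lp H 2))), ?_, ?_, ?_⟩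
  · apply finiteDimensional_of_le_cornerAlg W
    apply NonUnitalStarAlgebra.adjoin_le
    rintro _ ⟨a, ha, rfl⟩
    exact mem_cornerAlg_of_range_le W (hWle a ha).1 (hWle a ha).2
  · have hle : NonUnitalStarAlgebra.adjoin ℂ (b '' (F : Set (lp H 2 →L[ℂ] lp H 2))) ≤ 𝔄 := by
      apply NonUnitalStarAlgebra.adjoin_le
      rintro _ ⟨a, ha, rfl⟩
      rw [h𝔄]
      exact NonUnitalStarSubalgebra.le_topologicalClosure _ (hb₀ a ha)
    exact hle
  · intro a ha
    refine ⟨b a, ?_, hbε a ha⟩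
    exact NonUnitalStarAlgebra.subset_adjoin ℂ _ ⟨a, ha, rfl⟩
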